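/- Let (Z_n)_{n∈ℤ} be a stochastic process with values in ℝ^r, and let X₀ be an ℝ^q-valued random variable on the same probability space with |X₀|₁ ≤ M almost surely for some constant M > 0. Suppose there are a non-increasing function Φ : (0,∞) → (0,∞), nonnegative reals (a_k)_{k∈ℕ}, and measurable functions f_k : ℝ^{r×(2k+1)} → ℝ^q such that P(|X₀ − f_k(Z_{−k},…,Z_k)|₁ > ε) ≤ a_k Φ(ε) for all k ∈ ℕ and ε > 0. Then for every p ≥ 1 there exists a constant C > 0, depending only on M and p, such that for all k ∈ ℕ and all ε > 0: E|X₀ − E(X₀ | 𝔉_{−k}^k)|_p^p ≤ C (a_k Φ(ε) + ε), where 𝔉_{−k}^k = σ(Z_{−k},…,Z_k). In particular, if a_k → 0 then E|X₀ − E(X₀ | 𝔉_{−k}^k)|_p^p → 0 as k → ∞, and if moreover (s_k)_{k∈ℕ} is a sequence of nonnegative numbers with a_k Φ(s_k) = O(s_k), then E|X₀ − E(X₀ | 𝔉_{−k}^k)|_p^p = O(s_k) as k → ∞. -/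

import Mathlib

open MeasureTheory Filter

/-- The σ-field generated by the window `Z_{−k},…,Z_k` of the process `Z`. -/
def sigmaWindow {Ω : Type*} {r : ℕ} (Z : ℤ → Ω → (Fin r → ℝ)) (k : ℕ) :
    MeasurableSpace Ω :=
  MeasurableSpace.comap (fun ω => fun j : Fin (2 * k + 1) => Z ((j : ℤ) - k) ω) inferInstance

/-- Clamping a real number to `[-M, M]` brings it closer to any point of `[-M, M]`. -/
lemma clamp_abs_le {M x g : ℝ} (hM : 0 < M) (hx : |x| ≤ M) :
    |x - max (-M) (min M g)| ≤ |x - g| := by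
  rw [abs_le] at hx
  rcases le_total g M with h1 | h1
  · rcases le_total (-M) g with h2 | h2
    · rw [min_eq_right h1, max_eq_right h2]
    · rw [min_eq_right h1, max_eq_left h2]
      rw [abs_of_nonneg (by linarith), abs_of_nonneg (by linarith)]
      linarith
  · rw [min_eq_left h1, max_eq_right (by linarith : -M ≤ M)]
    rw [abs_of_nonpos (by linarith), abs_of_nonpos (by linarith)]
    linarith

/-- The key quantitative estimate for a single scale `k` and threshold `ε`. -/
lemma pned_key_bound
    {Ω : Type*} [m0 : MeasurableSpace Ω] (μ : Measure Ω) [IsProbabilityMeasure μ]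
    {r q : ℕ}
    (Z : ℤ → Ω → (Fin r → ℝ)) (hZ : ∀ n, Measurable (Z n))
    (X₀ : Ω → (Fin q → ℝ)) (hX : Measurable X₀)
    (M : ℝ) (hM : 0 < M) (hbdd : ∀ᵐ ω ∂μ, ∑ i, |X₀ ω i| ≤ M)
    (p : ℝ) (hp : 1 ≤ p) (k : ℕ)
    (g : Ω → Fin q → ℝ) (hg : Measurable[sigmaWindow Z k] g)
    (ε B : ℝ) (hε : 0 < ε) (hB : 0 ≤ B)
    (hPB : (μ {ω | ε < ∑ i, |X₀ ω i - g ω i|}).toReal ≤ B) :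
    ∫ ω, ∑ i, |X₀ ω i - (μ[fun ω' => X₀ ω' i | sigmaWindow Z k]) ω| ^ p ∂μ
      ≤ (2 * M) ^ (p - 1) * 2 * (ε + (1 + q) * M * B) := by
  have hm : sigmaWindow Z k ≤ m0 :=
    Measurable.comap_le (measurable_pi_lambda _ fun j => hZ _)
  haveI : SigmaFinite (μ.trim hm) := inferInstance
  -- the clamped approximation
  set g' : Ω → Fin q → ℝ := fun ω i => max (-M) (min M (g ω i)) with hg'_def
  have hg'm : ∀ i, Measurable[sigmaWindow Z k] fun ω => g' ω i := fun i =>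
    measurable_const.max (measurable_const.min ((measurable_pi_apply i).comp hg))
  have hg'm0 : ∀ i, Measurable fun ω => g' ω i := fun i => (hg'm i).mono hm le_rfl
  have hg'b : ∀ ω i, |g' ω i| ≤ M := by
    intro ω i
    rw [abs_le]
    exact ⟨le_max_left _ _, max_le (by linarith) (min_le_left _ _)⟩
  have hXb : ∀ᵐ ω ∂μ, ∀ i, |X₀ ω i| ≤ M := by
    filter_upwards [hbdd] with ω h i
    exact le_trans (Finset.single_le_sum (f := fun j => |X₀ ω j|) (fun j _ => abs_nonneg _) (Finset.mem_univ i)) h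
  have hXi : ∀ i, Measurable fun ω => X₀ ω i := fun i => (measurable_pi_apply i).comp hX
  have hXi_int : ∀ i, Integrable (fun ω => X₀ ω i) μ := by
    intro i
    refine (integrable_const M).mono' ((hXi i).aestronglyMeasurable) ?_
    filter_upwards [hXb] with ω h
    simpa [Real.norm_eq_abs] using h i
  have hg'_int : ∀ i, Integrable (fun ω => g' ω i) μ := by
    intro i
    refine (integrable_const M).mono' ((hg'm0 i).aestronglyMeasurable) ?_
    exact ae_of_all _ fun ω => by simpa [Real.norm_eq_abs] using hg'b ω i
  set ce : Fin q → Ω → ℝ := fun i => μ[fun ω' => X₀ ω' i | sigmaWindow Z k] with hce_def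
  have hce_meas : ∀ i, Measurable (ce i) := fun i =>
    (stronglyMeasurable_condExp.mono hm).measurable
  have hce_int : ∀ i, Integrable (ce i) μ := fun i => integrable_condExp
  have h_ce_g' : ∀ i, μ[(fun ω => g' ω i)|sigmaWindow Z k] = fun ω => g' ω i := fun i =>
    condExp_of_stronglyMeasurable hm ((hg'm i).stronglyMeasurable) (hg'_int i)
  have int1 : ∀ i, Integrable (fun ω => |X₀ ω i - ce i ω|) μ := fun i =>
    ((hXi_int i).sub (hce_int i)).abs
  have int2 : ∀ i, Integrable (fun ω => |X₀ ω i - g' ω i|) μ := fun i =>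
    ((hXi_int i).sub (hg'_int i)).abs
  have int3 : ∀ i, Integrable (fun ω => |g' ω i - ce i ω|) μ := fun i =>
    ((hg'_int i).sub (hce_int i)).abs
  -- coordinatewise contraction estimate
  have key1 : ∀ i, ∫ ω, |X₀ ω i - ce i ω| ∂μ ≤ 2 * ∫ ω, |X₀ ω i - g' ω i| ∂μ := by
    intro i
    have hsub : (fun ω => g' ω i - ce i ω)
        =ᵐ[μ] μ[(fun ω => g' ω i) - (fun ω => X₀ ω i)|sigmaWindow Z k] := by
      refine EventuallyEq.symm ?_
      filter_upwards [condExp_sub (m := sigmaWindow Z k) (μ := μ) (hg'_int i) (hXi_int i)] with ω hω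
      rw [hω, Pi.sub_apply, h_ce_g' i]
    have hsecond : ∫ ω, |g' ω i - ce i ω| ∂μ ≤ ∫ ω, |X₀ ω i - g' ω i| ∂μ := by
      have e1 : ∫ ω, |g' ω i - ce i ω| ∂μ
          = ∫ ω, |(μ[(fun ω => g' ω i) - (fun ω => X₀ ω i)|sigmaWindow Z k]) ω| ∂μ := by
        refine integral_congr_ae ?_
        filter_upwards [hsub] with ω hω
        rw [hω]
      rw [e1]
      refine le_trans (integral_abs_condExp_le _) ?_
      refine le_of_eq (integral_congr_ae (ae_of_all _ fun ω => ?_))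
      simp [abs_sub_comm]
    calc ∫ ω, |X₀ ω i - ce i ω| ∂μ
        ≤ ∫ ω, (|X₀ ω i - g' ω i| + |g' ω i - ce i ω|) ∂μ :=
          integral_mono_ae (int1 i) ((int2 i).add (int3 i))
            (ae_of_all _ fun ω => abs_sub_le _ _ _)
      _ = (∫ ω, |X₀ ω i - g' ω i| ∂μ) + ∫ ω, |g' ω i - ce i ω| ∂μ :=
          integral_add (int2 i) (int3 i)
      _ ≤ 2 * ∫ ω, |X₀ ω i - g' ω i| ∂μ := by linarith
  -- a.e. bound on the conditional expectation
  have hceb : ∀ᵐ ω ∂μ, ∀ i, |ce i ω| ≤ M := by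
    refine ae_all_iff.2 fun i => ?_
    have h : ∀ᵐ ω ∂μ, |X₀ ω i| ≤ ((⟨M, hM.le⟩ : NNReal) : ℝ) := by
      filter_upwards [hXb] with ω h
      exact h i
    exact ae_bdd_condExp_of_ae_bdd h
  -- a.e. pointwise rpow estimate
  have hpow : ∀ᵐ ω ∂μ, ∀ i, |X₀ ω i - ce i ω| ^ p
      ≤ (2 * M) ^ (p - 1) * |X₀ ω i - ce i ω| := by
    filter_upwards [hXb, hceb] with ω h1 h2 i
    set y := |X₀ ω i - ce i ω| with hy_def
    have hy0 : 0 ≤ y := abs_nonneg _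
    have hy2M : y ≤ 2 * M := by
      have h3 := h1 i; have h4 := h2 i
      calc y ≤ |X₀ ω i| + |ce i ω| := abs_sub _ _
        _ ≤ 2 * M := by linarith
    rcases eq_or_lt_of_le hy0 with h0 | h0
    · rw [← h0, Real.zero_rpow (by linarith : p ≠ 0)]
      have : (0:ℝ) ≤ (2 * M) ^ (p - 1) := Real.rpow_nonneg (by linarith) _
      nlinarith
    · have e : y ^ p = y ^ (p - 1) * y := by
        rw [← Real.rpow_add_one h0.ne' (p - 1)]
        ring_nf
      rw [e]
      exact mul_le_mul_of_nonneg_right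
        (Real.rpow_le_rpow hy0 hy2M (by linarith)) hy0
  -- integrability of the two sums
  have hterm_meas : ∀ i, Measurable fun ω => |X₀ ω i - ce i ω| ^ p := fun i =>
    (Real.continuous_rpow_const (by linarith : (0:ℝ) ≤ p)).measurable.comp
      ((hXi i).sub (hce_meas i)).abs
  have intL : Integrable (fun ω => ∑ i, |X₀ ω i - ce i ω|) μ :=
    integrable_finset_sum _ fun i _ => int1 i
  have intP : Integrable (fun ω => ∑ i, |X₀ ω i - ce i ω| ^ p) μ := by
    refine (integrable_const ((q : ℝ) * (2 * M) ^ p)).mono'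
      ((Finset.measurable_sum _ fun i _ => hterm_meas i).aestronglyMeasurable) ?_
    filter_upwards [hXb, hceb] with ω h1 h2
    rw [Real.norm_eq_abs,
      abs_of_nonneg (Finset.sum_nonneg fun i _ => Real.rpow_nonneg (abs_nonneg _) _)]
    calc (∑ i, |X₀ ω i - ce i ω| ^ p) ≤ ∑ _i : Fin q, (2 * M) ^ p := by
          refine Finset.sum_le_sum fun i _ => ?_
          refine Real.rpow_le_rpow (abs_nonneg _) ?_ (by linarith)
          calc |X₀ ω i - ce i ω| ≤ |X₀ ω i| + |ce i ω| := abs_sub _ _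
            _ ≤ 2 * M := by have := h1 i; have := h2 i; linarith
      _ = q * (2 * M) ^ p := by simp [Finset.sum_const, nsmul_eq_mul]
  -- Step A : expectation of the clamped ℓ¹-error
  set D' : Ω → ℝ := fun ω => ∑ i, |X₀ ω i - g' ω i| with hD'_def
  have hD'meas : Measurable D' :=
    Finset.measurable_sum _ fun i _ => ((hXi i).sub (hg'm0 i)).abs
  have hD'nonneg : ∀ ω, 0 ≤ D' ω := fun ω => Finset.sum_nonneg fun i _ => abs_nonneg _
  set S := {ω | ε < D' ω} with hS_def
  have hSmeas : MeasurableSet S := measurableSet_lt measurable_const hD'meas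
  have hD'leD : ∀ᵐ ω ∂μ, D' ω ≤ ∑ i, |X₀ ω i - g ω i| := by
    filter_upwards [hXb] with ω h
    exact Finset.sum_le_sum fun i _ => clamp_abs_le hM (h i)
  have hSsub : μ S ≤ μ {ω | ε < ∑ i, |X₀ ω i - g ω i|} := by
    refine measure_mono_ae ?_
    filter_upwards [hD'leD] with ω h hin
    exact lt_of_lt_of_le hin h
  have hμS : (μ S).toReal ≤ B :=
    le_trans (ENNReal.toReal_mono (measure_ne_top μ _) hSsub) hPB
  have hq0 : (0:ℝ) ≤ (1 + q) * M := by positivity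
  have hD'bd : ∀ᵐ ω ∂μ, D' ω ≤ (1 + q) * M := by
    filter_upwards [hbdd] with ω h
    calc D' ω ≤ ∑ i, (|X₀ ω i| + |g' ω i|) := Finset.sum_le_sum fun i _ => abs_sub _ _
      _ = (∑ i, |X₀ ω i|) + ∑ i, |g' ω i| := Finset.sum_add_distrib
      _ ≤ M + q * M := by
          refine add_le_add h ?_
          calc (∑ i : Fin q, |g' ω i|) ≤ ∑ _i : Fin q, M :=
                Finset.sum_le_sum fun i _ => hg'b ω i
            _ = q * M := by simp [Finset.sum_const, nsmul_eq_mul]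
      _ = (1 + q) * M := by ring
  have intD' : Integrable D' μ := by
    refine (integrable_const ((1 + q) * M)).mono' hD'meas.aestronglyMeasurable ?_
    filter_upwards [hD'bd] with ω h
    rw [Real.norm_eq_abs, abs_of_nonneg (hD'nonneg ω)]
    exact h
  have hED' : ∫ ω, D' ω ∂μ ≤ ε + (1 + q) * M * B := by
    have hindint : Integrable (S.indicator fun _ => (1 + q) * M) μ :=
      (integrable_const _).indicator hSmeas
    have hpt : ∀ᵐ ω ∂μ, D' ω ≤ ε + S.indicator (fun _ => (1 + q) * M) ω := by
      filter_upwards [hD'bd] with ω h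
      by_cases hω : ω ∈ S
      · rw [Set.indicator_of_mem hω]; linarith
      · rw [Set.indicator_of_notMem hω]
        have : ¬ ε < D' ω := hω
        push_neg at this; linarith
    calc ∫ ω, D' ω ∂μ ≤ ∫ ω, (ε + S.indicator (fun _ => (1 + q) * M) ω) ∂μ :=
        integral_mono_ae intD' ((integrable_const ε).add hindint) hpt
      _ = ε + (μ S).toReal * ((1 + q) * M) := by
          rw [integral_add (integrable_const ε) hindint, integral_const,
            integral_indicator_const _ hSmeas]
          simp [measure_univ, smul_eq_mul, measureReal_def]
      _ ≤ ε + (1 + q) * M * B := by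
          nlinarith [ENNReal.toReal_nonneg (a := μ S), mul_le_mul_of_nonneg_left hμS hq0]
  have hED'sum : ∫ ω, D' ω ∂μ = ∑ i, ∫ ω, |X₀ ω i - g' ω i| ∂μ :=
    integral_finset_sum _ fun i _ => int2 i
  have hsum2 : (∑ i, ∫ ω, |X₀ ω i - ce i ω| ∂μ) ≤ 2 * ∫ ω, D' ω ∂μ := by
    rw [hED'sum, Finset.mul_sum]
    exact Finset.sum_le_sum fun i _ => key1 i
  have hLnn : (0:ℝ) ≤ (2 * M) ^ (p - 1) := Real.rpow_nonneg (by linarith) _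
  show ∫ ω, ∑ i, |X₀ ω i - ce i ω| ^ p ∂μ
      ≤ (2 * M) ^ (p - 1) * 2 * (ε + (1 + q) * M * B)
  calc ∫ ω, ∑ i, |X₀ ω i - ce i ω| ^ p ∂μ
      ≤ ∫ ω, (2 * M) ^ (p - 1) * ∑ i, |X₀ ω i - ce i ω| ∂μ := by
        refine integral_mono_ae intP (intL.const_mul _) ?_
        filter_upwards [hpow] with ω h
        rw [Finset.mul_sum]
        exact Finset.sum_le_sum fun i _ => h i
    _ = (2 * M) ^ (p - 1) * ∫ ω, ∑ i, |X₀ ω i - ce i ω| ∂μ := integral_const_mul _ _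
    _ = (2 * M) ^ (p - 1) * ∑ i, ∫ ω, |X₀ ω i - ce i ω| ∂μ := by
        rw [integral_finset_sum _ fun i _ => int1 i]
    _ ≤ (2 * M) ^ (p - 1) * (2 * ∫ ω, D' ω ∂μ) := mul_le_mul_of_nonneg_left hsum2 hLnn
    _ ≤ (2 * M) ^ (p - 1) * 2 * (ε + (1 + q) * M * B) := by
        nlinarith [mul_le_mul_of_nonneg_left hED' hLnn]

theorem pned_bounded_implies_lpned
    {Ω : Type*} [m0 : MeasurableSpace Ω] (μ : Measure Ω) [IsProbabilityMeasure μ]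
    {r q : ℕ}
    (Z : ℤ → Ω → (Fin r → ℝ)) (hZ : ∀ n, Measurable (Z n))
    (X₀ : Ω → (Fin q → ℝ)) (hX : Measurable X₀)
    (M : ℝ) (hM : 0 < M) (hbdd : ∀ᵐ ω ∂μ, ∑ i, |X₀ ω i| ≤ M)
    (Φ : ℝ → ℝ) (hΦpos : ∀ x : ℝ, 0 < x → 0 < Φ x)
    (hΦ : ∀ x y : ℝ, 0 < x → x ≤ y → Φ y ≤ Φ x)
    (a : ℕ → ℝ) (ha : ∀ k, 0 ≤ a k)
    (f : (k : ℕ) → ((Fin (2 * k + 1) → (Fin r → ℝ)) → (Fin q → ℝ)))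
    (hf : ∀ k, Measurable (f k))
    (hP : ∀ (k : ℕ) (ε : ℝ), 0 < ε →
      (μ {ω | ε < ∑ i, |X₀ ω i - f k (fun j => Z ((j : ℤ) - k) ω) i|}).toReal
        ≤ a k * Φ ε) :
    ∀ p : ℝ, 1 ≤ p → ∃ C : ℝ, 0 < C ∧
      (∀ (k : ℕ) (ε : ℝ), 0 < ε →
        ∫ ω, ∑ i, |X₀ ω i - (μ[fun ω' => X₀ ω' i | sigmaWindow Z k]) ω| ^ p ∂μ
          ≤ C * (a k * Φ ε + ε))
      ∧ (Tendsto a atTop (nhds 0) →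
          Tendsto (fun k =>
              ∫ ω, ∑ i, |X₀ ω i - (μ[fun ω' => X₀ ω' i | sigmaWindow Z k]) ω| ^ p ∂μ)
            atTop (nhds 0))
      ∧ (∀ s : ℕ → ℝ, (∀ k, 0 < s k) → Tendsto s atTop (nhds 0) →
          (fun k => a k * Φ (s k)) =O[atTop] s →
          (fun k =>
              ∫ ω, ∑ i, |X₀ ω i - (μ[fun ω' => X₀ ω' i | sigmaWindow Z k]) ω| ^ p ∂μ)
            =O[atTop] s) := by
  intro p hp
  have hL : 0 < (2 * M) ^ (p - 1) := Real.rpow_pos_of_pos (by linarith) _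
  set C := 2 * (2 * M) ^ (p - 1) * ((1 + q) * M + 1) with hC_def
  have hq1 : (0:ℝ) < (1 + q) * M + 1 := by positivity
  have hCpos : 0 < C := by
    have := mul_pos (mul_pos (by norm_num : (0:ℝ) < 2) hL) hq1
    simpa [hC_def] using this
  have Inonneg : ∀ k : ℕ,
      0 ≤ ∫ ω, ∑ i, |X₀ ω i - (μ[fun ω' => X₀ ω' i | sigmaWindow Z k]) ω| ^ p ∂μ :=
    fun k => integral_nonneg fun ω =>
      Finset.sum_nonneg fun i _ => Real.rpow_nonneg (abs_nonneg _) _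
  have bound : ∀ (k : ℕ) (ε : ℝ), 0 < ε →
      ∫ ω, ∑ i, |X₀ ω i - (μ[fun ω' => X₀ ω' i | sigmaWindow Z k]) ω| ^ p ∂μ
        ≤ C * (a k * Φ ε + ε) := by
    intro k ε hε
    have hg : Measurable[sigmaWindow Z k]
        fun ω => f k (fun j => Z ((j : ℤ) - k) ω) :=
      (hf k).comp (Measurable.of_comap_le le_rfl)
    have ht : 0 ≤ a k * Φ ε := mul_nonneg (ha k) (hΦpos ε hε).le
    have hkey := pned_key_bound μ Z hZ X₀ hX M hM hbdd p hp k _ hg ε (a k * Φ ε)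
      hε ht (hP k ε hε)
    refine hkey.trans ?_
    have hqM : (0:ℝ) ≤ (1 + q) * M := by positivity
    rw [hC_def]
    nlinarith [mul_nonneg (mul_nonneg hL.le hqM) hε.le, mul_nonneg hL.le ht,
      mul_nonneg (mul_nonneg hL.le hqM) ht]
  refine ⟨C, hCpos, bound, ?_, ?_⟩
  · intro haT
    rw [Metric.tendsto_atTop]
    intro δ hδ
    set ε := δ / (4 * C) with hε_def
    have hε : 0 < ε := by positivity
    have hΦε : 0 < Φ ε := hΦpos ε hε
    have hev : ∀ᶠ k in atTop, a k < ε / Φ ε :=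
      haT.eventually_lt_const (by positivity)
    obtain ⟨N, hN⟩ := eventually_atTop.1 hev
    refine ⟨N, fun k hk => ?_⟩
    have h1 : a k * Φ ε ≤ ε := by
      have h := hN k hk
      calc a k * Φ ε ≤ (ε / Φ ε) * Φ ε := mul_le_mul_of_nonneg_right h.le hΦε.le
        _ = ε := div_mul_cancel₀ _ hΦε.ne'
    have h2 := bound k ε hε
    rw [Real.dist_eq, sub_zero, abs_of_nonneg (Inonneg k)]
    have h3 : C * (a k * Φ ε + ε) ≤ 2 * C * ε := by nlinarith
    have hfin : 2 * C * ε = δ / 2 := by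
      rw [hε_def]; field_simp; ring
    linarith
  · intro s hs hsT hO
    rw [Asymptotics.isBigO_iff] at hO ⊢
    obtain ⟨c, hc⟩ := hO
    refine ⟨C * (c + 1), ?_⟩
    filter_upwards [hc] with k hk
    have h2 := bound k (s k) (hs k)
    have hsk := hs k
    have h3 : a k * Φ (s k) ≤ c * s k := by
      rw [Real.norm_eq_abs, Real.norm_eq_abs, abs_of_pos hsk] at hk
      exact (le_abs_self _).trans hk
    rw [Real.norm_eq_abs, Real.norm_eq_abs, abs_of_nonneg (Inonneg k), abs_of_pos hsk]
    nlinarith [mul_le_mul_of_nonneg_left (add_le_add_right h3 (s k)) hCpos.le]
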